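/- arXiv:1907.02723 — 3 statements merged into one kernel-verified Lean document; each statement's English description precedes it below -/
import Mathlib

section
/- There exists a constant C₁ > 0 such that for all t ≥ 0, −2 + 1.97t + (2+4t)/(0.01+2t(1+t))^2 ≥ C₁. -/
theorem stmt_2 : ∃ C₁ : ℝ, 0 < C₁ ∧ ∀ t : ℝ, 0 ≤ t →
    C₁ ≤ -2 + 1.97*t + (2 + 4*t)/(0.01 + 2*t*(1+t))^2 := by
  refine ⟨0.01, by norm_num, fun t ht => ?_⟩
  have hD : (0:ℝ) < 0.01 + 2*t*(1+t) := by nlinarith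
  have hD2 : (0:ℝ) < (0.01 + 2*t*(1+t))^2 := by positivity

  have key : (-2.01 + 1.97*t) * (0.01 + 2*t*(1+t))^2 + (2 + 4*t) ≥ 0 := by
    nlinarith [sq_nonneg (t - 0.683), sq_nonneg t, sq_nonneg (t*(t-0.683)), sq_nonneg (t*t - 0.683), mul_nonneg ht ht, mul_nonneg (mul_nonneg ht ht) ht]
  have h2 : (2 + 4*t)/(0.01 + 2*t*(1+t))^2 ≥ (2.01 - 1.97*t) := by
    rw [ge_iff_le, le_div_iff₀ hD2]
    nlinarith [key]
  linarith
end

section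
/- The function Sc(t) = −2 + 1.97t + (2+4t)/(0.01+2t(1+t))² satisfies Sc(0) = 19998, and Sc is bounded below on [0,∞) by a positive constant. -/
theorem stmt_10 (Sc : ℝ → ℝ)
    (hSc : Sc = fun t => -2 + 1.97*t + (2 + 4*t)/(0.01 + 2*t*(1+t))^2) :
    Sc 0 = 19998 ∧ ∃ C : ℝ, 0 < C ∧ ∀ t : ℝ, 0 ≤ t → C ≤ Sc t := by
  subst hSc
  constructor
  · norm_num
  · refine ⟨0.1, by norm_num, fun t ht => ?_⟩
    have hD : (0:ℝ) < 0.01 + 2*t*(1+t) := by nlinarith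
    have hD2 : (0:ℝ) < (0.01 + 2*t*(1+t))^2 := by positivity
    have key : (2.1 - 1.97*t) * (0.01 + 2*t*(1+t))^2 ≤ 2 + 4*t := by nlinarith [mul_nonneg ht (sq_nonneg (t - 3/4)), mul_nonneg (mul_nonneg ht ht) (sq_nonneg (t - 3/4)), mul_nonneg (mul_nonneg (mul_nonneg ht ht) ht) (sq_nonneg (t - 3/4)), sq_nonneg (t - 3/4), sq_nonneg t, mul_nonneg ht ht]
    have h3 : 2.1 - 1.97*t ≤ (2 + 4*t)/(0.01 + 2*t*(1+t))^2 := by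
      rw [le_div_iff₀ hD2]; exact key
    simp only
    linarith
end

section
/- Let g(t) = 7.88t^5 + 7.76t^4 − 8.0412t^3 − 8.0012t^2 + 3.920197t + 1.9998 and h(t) = (0.01+2t(1+t))². Then the infimum of g(t)/h(t) over t ∈ [0,∞) is strictly positive. -/
theorem stmt_11 (g h : ℝ → ℝ)
    (hg : g = fun t => 7.88*t^5 + 7.76*t^4 - 8.0412*t^3 - 8.0012*t^2 + 3.920197*t + 1.9998)
    (hh : h = fun t => (0.01 + 2*t*(1+t))^2) :
    0 < sInf ((fun t => g t / h t) '' Set.Ici (0:ℝ)) := by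
  have key : ∀ t ∈ Set.Ici (0:ℝ), (0.1:ℝ) ≤ g t / h t := by
    intro t ht
    simp only [Set.mem_Ici] at ht
    have hpos : (0:ℝ) < 0.01 + 2*t*(1+t) := by nlinarith
    have hhpos : 0 < h t := by rw [hh]; positivity
    rw [le_div_iff₀ hhpos, hg, hh]
    nlinarith [sq_nonneg (t - 0.8), sq_nonneg (t - 1), sq_nonneg t, mul_nonneg ht ht,
      mul_nonneg (mul_nonneg ht ht) ht, sq_nonneg (t*t - t), sq_nonneg (t - 0.75),
      mul_nonneg ht (sq_nonneg (t - 0.8)), mul_nonneg (mul_nonneg ht ht) (sq_nonneg (t - 0.8)),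
      mul_nonneg ht (sq_nonneg (t - 1))]
  have hne : ((fun t => g t / h t) '' Set.Ici (0:ℝ)).Nonempty :=
    ⟨_, Set.mem_image_of_mem _ (Set.self_mem_Ici)⟩
  have hle : (0.1:ℝ) ≤ sInf ((fun t => g t / h t) '' Set.Ici (0:ℝ)) := by
    apply le_csInf hne
    rintro x ⟨t, ht, rfl⟩
    exact key t ht
  linarith
end
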